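/- If Maker has a winning strategy in the Maker-Breaker game of arboricity on a finite graph G with k colours, then Maker also has a winning strategy on G with k+1 colours. -/

import Mathlib

/-- The spanning subgraph of `G` consisting of those edges given colour `c`
by the partial edge-colouring `f`. -/
def colourSub {V : Type} (G : SimpleGraph V) {k : ℕ} (f : Sym2 V → Option (Fin k))
    (c : Fin k) : SimpleGraph V where
  Adj u v := G.Adj u v ∧ f s(u, v) = some c
  symm := ⟨fun u v h => ⟨h.1.symm, by rw [Sym2.eq_swap]; exact h.2⟩⟩
  loopless := ⟨fun u h => G.loopless.irrefl u h.1⟩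

/-- Assigning colour `c` to the uncoloured edge `xy` is a legal move in the game of
arboricity: it creates no monochromatic cycle. -/
def ArbLegal {V : Type} (G : SimpleGraph V) {k : ℕ} (f : Sym2 V → Option (Fin k))
    (x y : V) (c : Fin k) : Prop :=
  G.Adj x y ∧ f s(x, y) = none ∧ ¬ (colourSub G f c).Reachable x y

/-- Some uncoloured edge cannot be given any colour: Breaker's winning condition. -/
def ArbStuck {V : Type} (G : SimpleGraph V) {k : ℕ} (f : Sym2 V → Option (Fin k)) : Prop :=
  ∃ x y, G.Adj x y ∧ f s(x, y) = none ∧ ∀ c, (colourSub G f c).Reachable x y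

/-- `ArbMakerWins G k f t` : Maker has a winning strategy in the game of arboricity with
`k` colours from the position with partial colouring `f`, where `t = true` means it is
Maker's turn, `t = false` Breaker's turn.  Maker wins when every edge is coloured,
having avoided any uncoloured edge ever becoming unplayable. -/
inductive ArbMakerWins {V : Type} [DecidableEq V] (G : SimpleGraph V) (k : ℕ) :
    (Sym2 V → Option (Fin k)) → Bool → Prop
  | done (f : Sym2 V → Option (Fin k)) (t : Bool) (h : ∀ e ∈ G.edgeSet, f e ≠ none) :
      ArbMakerWins G k f t
  | maker (f : Sym2 V → Option (Fin k)) (hns : ¬ ArbStuck G f) (x y : V) (c : Fin k)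
      (hc : ArbLegal G f x y c)
      (h : ArbMakerWins G k (Function.update f s(x, y) (some c)) false) :
      ArbMakerWins G k f true
  | breaker (f : Sym2 V → Option (Fin k)) (hns : ¬ ArbStuck G f)
      (hne : ∃ e ∈ G.edgeSet, f e = none)
      (h : ∀ x y c, ArbLegal G f x y c →
        ArbMakerWins G k (Function.update f s(x, y) (some c)) true) :
      ArbMakerWins G k f false

/-! ### Auxiliary material for the monotonicity proof -/

/-- The simulation invariant between a `k`-colour position `f'` and a `(k+1)`-colour
position `f` : the same edges are coloured, and reachability in each real colour class
`c.castSucc` implies reachability in the simulated class `c`. -/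
def ArbInv {V : Type} (G : SimpleGraph V) {k : ℕ} (f' : Sym2 V → Option (Fin k))
    (f : Sym2 V → Option (Fin (k + 1))) : Prop :=
  (∀ e, f e = none ↔ f' e = none) ∧
  ∀ (c : Fin k) (a b : V), (colourSub G f c.castSucc).Reachable a b →
    (colourSub G f' c).Reachable a b

lemma reach_trans_aux {V : Type} {H1 H1o H2 : SimpleGraph V} {x y : V}
    (h : ∀ u v, H1.Adj u v → H1o.Adj u v ∨ s(u, v) = s(x, y))
    (hR : ∀ a b, H1o.Reachable a b → H2.Reachable a b)
    (hxy : H2.Reachable x y) :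
    ∀ a b, H1.Reachable a b → H2.Reachable a b := by
  intro a b hab
  obtain ⟨w⟩ := hab
  induction w with
  | nil => exact SimpleGraph.Reachable.refl _
  | cons hadj p ih =>
    rcases h _ _ hadj with h' | h'
    · exact (hR _ _ h'.reachable).trans ih
    · rw [Sym2.eq_iff] at h'
      rcases h' with ⟨rfl, rfl⟩ | ⟨rfl, rfl⟩
      · exact hxy.trans ih
      · exact hxy.symm.trans ih

lemma colourSub_le_update {V : Type} [DecidableEq V] (G : SimpleGraph V) {k : ℕ}
    (f : Sym2 V → Option (Fin k)) (e0 : Sym2 V) (he : f e0 = none)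
    (v : Option (Fin k)) (c : Fin k) :
    colourSub G f c ≤ colourSub G (Function.update f e0 v) c := by
  intro u w h
  refine ⟨h.1, ?_⟩
  rw [Function.update_apply]
  split_ifs with h'
  · have h2 := h.2
    rw [h', he] at h2
    exact absurd h2 (by simp)
  · exact h.2

lemma colourSub_update_le {V : Type} [DecidableEq V] (G : SimpleGraph V) {k : ℕ}
    (f : Sym2 V → Option (Fin k)) (e0 : Sym2 V) (d c : Fin k) (hdc : d ≠ c) :
    colourSub G (Function.update f e0 (some d)) c ≤ colourSub G f c := by
  intro u w h
  refine ⟨h.1, ?_⟩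
  have h2 := h.2
  rw [Function.update_apply] at h2
  split_ifs at h2 with h'
  · exact absurd (Option.some_injective _ h2) hdc
  · exact h2

lemma arbInv_step {V : Type} [DecidableEq V] (G : SimpleGraph V) {k : ℕ}
    {f' : Sym2 V → Option (Fin k)} {f : Sym2 V → Option (Fin (k + 1))}
    (hInv : ArbInv G f' f) {x y : V}
    (hf : f s(x, y) = none) (hf' : f' s(x, y) = none)
    (d : Fin (k + 1)) (c'' : Fin k)
    (hmatch : ∀ c : Fin k, d = c.castSucc →
      (colourSub G (Function.update f' s(x, y) (some c'')) c).Reachable x y) :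
    ArbInv G (Function.update f' s(x, y) (some c''))
      (Function.update f s(x, y) (some d)) := by
  constructor
  · intro e
    rcases eq_or_ne e s(x, y) with rfl | he
    · simp
    · rw [Function.update_of_ne he, Function.update_of_ne he]
      exact hInv.1 e
  · intro c a b hab
    by_cases hdc : d = c.castSucc
    · refine reach_trans_aux (H1o := colourSub G f c.castSucc) ?_ ?_ (hmatch c hdc) a b hab
      · intro u v hu
        rcases eq_or_ne s(u, v) s(x, y) with h' | h'
        · exact Or.inr h'
        · refine Or.inl ⟨hu.1, ?_⟩
          have h2 := hu.2
          rwa [Function.update_of_ne h'] at h2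
      · intro a b h
        exact (hInv.2 c a b h).mono (colourSub_le_update G f' s(x, y) hf' _ c)
    · have h1 : colourSub G (Function.update f s(x, y) (some d)) c.castSucc ≤
          colourSub G f c.castSucc := colourSub_update_le _ _ _ _ _ hdc
      exact ((hInv.2 c a b (hab.mono h1)).mono (colourSub_le_update G f' s(x, y) hf' _ c))

lemma arbStuck_transfer {V : Type} (G : SimpleGraph V) {k : ℕ}
    {f' : Sym2 V → Option (Fin k)} {f : Sym2 V → Option (Fin (k + 1))}
    (hInv : ArbInv G f' f) (hs : ArbStuck G f) : ArbStuck G f' := by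
  obtain ⟨x, y, hadj, hnone, hall⟩ := hs
  exact ⟨x, y, hadj, (hInv.1 _).mp hnone, fun c => hInv.2 c x y (hall c.castSucc)⟩

lemma arbLegal_transfer {V : Type} (G : SimpleGraph V) {k : ℕ}
    {f' : Sym2 V → Option (Fin k)} {f : Sym2 V → Option (Fin (k + 1))}
    (hInv : ArbInv G f' f) {x y : V} {c : Fin k}
    (h : ArbLegal G f' x y c) : ArbLegal G f x y c.castSucc :=
  ⟨h.1, (hInv.1 _).mpr h.2.1, fun hr => h.2.2 (hInv.2 c x y hr)⟩

lemma not_stuck_exists {V : Type} (G : SimpleGraph V) {k : ℕ}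
    {f' : Sym2 V → Option (Fin k)} (hns : ¬ ArbStuck G f') {x y : V}
    (hadj : G.Adj x y) (hnone : f' s(x, y) = none) :
    ∃ c, ArbLegal G f' x y c := by
  by_contra hc
  push_neg at hc
  exact hns ⟨x, y, hadj, hnone, fun c => by
    by_contra hr
    exact hc c ⟨hadj, hnone, hr⟩⟩

lemma arb_main {V : Type} [DecidableEq V] (G : SimpleGraph V) (k : ℕ)
    {f' : Sym2 V → Option (Fin k)} {t : Bool}
    (h : ArbMakerWins G k f' t) :
    ∀ f : Sym2 V → Option (Fin (k + 1)), ArbInv G f' f → ArbMakerWins G (k + 1) f t := by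
  induction h with
  | done f' t hall =>
    intro f hInv
    exact .done f t fun e he hn => hall e he ((hInv.1 e).mp hn)
  | maker f' hns x y c hc h ih =>
    intro f hInv
    refine .maker f (fun hs => hns (arbStuck_transfer G hInv hs)) x y c.castSucc
      (arbLegal_transfer G hInv hc) ?_
    refine ih _ (arbInv_step G hInv ((hInv.1 _).mpr hc.2.1) hc.2.1 c.castSucc c ?_)
    intro c0 hc0
    have : c0 = c := Fin.castSucc_injective _ hc0.symm
    subst this
    exact SimpleGraph.Adj.reachable ⟨hc.1, by simp⟩
  | breaker f' hns hne h ih =>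
    intro f hInv
    refine .breaker f (fun hs => hns (arbStuck_transfer G hInv hs)) ?_ ?_
    · obtain ⟨e, heG, hnone⟩ := hne
      exact ⟨e, heG, (hInv.1 e).mpr hnone⟩
    · intro x y d hleg
      obtain ⟨hadj, hfnone, -⟩ := hleg
      have hf' : f' s(x, y) = none := (hInv.1 _).mp hfnone
      by_cases hm : ∃ c, d = c.castSucc ∧ ArbLegal G f' x y c
      · obtain ⟨c, hdc, hlc⟩ := hm
        refine ih x y c hlc _ (arbInv_step G hInv hfnone hf' d c ?_)
        intro c0 hc0
        have : c0 = c := Fin.castSucc_injective _ (hdc.symm.trans hc0).symm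
        subst this
        exact SimpleGraph.Adj.reachable ⟨hadj, by simp⟩
      · obtain ⟨c'', hlc⟩ := not_stuck_exists G hns hadj hf'
        refine ih x y c'' hlc _ (arbInv_step G hInv hfnone hf' d c'' ?_)
        intro c0 hc0
        have hnl : ¬ ArbLegal G f' x y c0 := fun hl => hm ⟨c0, hc0, hl⟩
        have hr : (colourSub G f' c0).Reachable x y := by
          by_contra hr
          exact hnl ⟨hadj, hf', hr⟩
        exact hr.mono (colourSub_le_update G f' s(x, y) hf' _ c0)

/-- If Maker has a winning strategy in the game of arboricity on a
finite graph `G` with `k` colours, then Maker also has a winning strategy on `G` with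
`k + 1` colours. -/
theorem arboricity_maker_monotone {V : Type} [Fintype V] [DecidableEq V]
    (G : SimpleGraph V) (k : ℕ)
    (h : ArbMakerWins G k (fun _ => none) true) :
    ArbMakerWins G (k + 1) (fun _ => none) true := by
  refine arb_main G k h _ ⟨fun e => by simp, ?_⟩
  intro c a b hab
  obtain ⟨w⟩ := hab
  induction w with
  | nil => exact SimpleGraph.Reachable.refl _
  | cons hadj p ih => exact absurd hadj.2 (by simp)
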